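/- For every integer m ≥ 3 there exist vectors u_1, u_2, u_3 ∈ F_{2^m}² such that for all x_1, x_2, x_3, x_4, x_5 ∈ F_{2^m}, at least one of u_1, u_2, u_3 does not lie in the F_2-linear span of {(x_j, x_j³) : 1 ≤ j ≤ 5} inside F_{2^m}². (Equivalently, the third generalized covering radius satisfies ρ_3(BCH(2,m)) ≥ 6.) -/

import Mathlib

open Module Submodule

private lemma bch_zmod2_cases (c : ZMod 2) : c = 0 ∨ c = 1 := by
  have h : ∀ x : ZMod 2, x = 0 ∨ x = 1 := by decide
  exact h c

section CharTwo

variable {K : Type*} [Field K] [CharP K 2] [Module (ZMod 2) K]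

private lemma bch_cube_add (s y : K) : (s + y) ^ 3 = s ^ 3 + y ^ 3 + s * y * (s + y) := by
  have h2 : (2 : K) = 0 := CharTwo.two_eq_zero
  linear_combination (s ^ 2 * y + s * y ^ 2) * h2

private lemma bch_prod_mem (a b : K) (y z : K)
    (hy : ∃ c d : ZMod 2, y = c • a + d • b) (hz : ∃ c d : ZMod 2, z = c • a + d • b) :
    y * z * (y + z) = 0 ∨ y * z * (y + z) = a * b * (a + b) := by
  have h2 : (2 : K) = 0 := CharTwo.two_eq_zero
  obtain ⟨c, d, rfl⟩ := hy
  obtain ⟨c', d', rfl⟩ := hz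
  rcases bch_zmod2_cases c with rfl | rfl <;> rcases bch_zmod2_cases d with rfl | rfl <;>
    rcases bch_zmod2_cases c' with rfl | rfl <;> rcases bch_zmod2_cases d' with rfl | rfl <;>
    simp only [zero_smul, one_smul, zero_add, add_zero] <;>
    first
      | (left; ring1)
      | (right; ring1)
      | (left; linear_combination a ^ 3 * h2)
      | (left; linear_combination b ^ 3 * h2)
      | (left; linear_combination (a + b) ^ 3 * h2)
      | (right; linear_combination (a ^ 2 * (a + b)) * h2)
      | (right; linear_combination (b ^ 2 * (a + b)) * h2)
      | (left; trivial)
      | (right; trivial)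

private lemma bch_sum_cube (a b : K) (y : Fin 5 → K)
    (hy : ∀ j, ∃ c d : ZMod 2, y j = c • a + d • b) (S : Finset (Fin 5)) :
    (∃ c d : ZMod 2, (∑ j ∈ S, y j) = c • a + d • b) ∧
      ((∑ j ∈ S, y j) ^ 3 + ∑ j ∈ S, (y j) ^ 3 = 0 ∨
        (∑ j ∈ S, y j) ^ 3 + ∑ j ∈ S, (y j) ^ 3 = a * b * (a + b)) := by
  classical
  have h2 : (2 : K) = 0 := CharTwo.two_eq_zero
  induction S using Finset.cons_induction with
  | empty => exact ⟨⟨0, 0, by simp⟩, Or.inl (by simp)⟩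
  | cons i S hi ih =>
    obtain ⟨⟨c, d, hs⟩, hcube⟩ := ih
    obtain ⟨c', d', hyi⟩ := hy i
    rw [Finset.sum_cons, Finset.sum_cons]
    constructor
    · refine ⟨c' + c, d' + d, ?_⟩
      rw [hyi, hs, add_smul, add_smul]
      abel
    · have hG : (y i + ∑ j ∈ S, y j) ^ 3 + ((y i) ^ 3 + ∑ j ∈ S, (y j) ^ 3)
          = ((∑ j ∈ S, y j) ^ 3 + ∑ j ∈ S, (y j) ^ 3)
            + (y i * (∑ j ∈ S, y j) * (y i + ∑ j ∈ S, y j)) := by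
        linear_combination bch_cube_add (y i) (∑ j ∈ S, y j) + (y i) ^ 3 * h2
      have hprod := bch_prod_mem a b (y i) (∑ j ∈ S, y j) ⟨c', d', hyi⟩ ⟨c, d, hs⟩
      rw [hG]
      rcases hcube with h | h <;> rcases hprod with h' | h' <;> rw [h, h'] <;>
        simp [CharTwo.add_self_eq_zero]

end CharTwo

private lemma bch_exists_pair {V : Type*} [AddCommGroup V] [Module (ZMod 2) V]
    [FiniteDimensional (ZMod 2) V] (W : Submodule (ZMod 2) V)
    (h : finrank (ZMod 2) W ≤ 2) :
    ∃ a b : V, ∀ w ∈ W, ∃ c d : ZMod 2, w = c • a + d • b := by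
  obtain ⟨n, hn, ⟨B⟩⟩ : ∃ n, n ≤ 2 ∧ Nonempty (Basis (Fin n) (ZMod 2) W) :=
    ⟨finrank (ZMod 2) W, h, ⟨finBasis (ZMod 2) W⟩⟩
  interval_cases n
  · refine ⟨0, 0, fun w hw => ⟨0, 0, ?_⟩⟩
    have h0 := B.sum_repr ⟨w, hw⟩
    simp only [Finset.univ_eq_empty, Finset.sum_empty] at h0
    have hw0 : w = 0 := by
      have := congrArg (Subtype.val) h0
      simpa using this.symm
    simp [hw0]
  · refine ⟨(B 0 : V), 0, fun w hw => ⟨B.repr ⟨w, hw⟩ 0, 0, ?_⟩⟩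
    have h0 := B.sum_repr ⟨w, hw⟩
    rw [Fin.sum_univ_one] at h0
    have := congrArg (Subtype.val) h0
    simpa using this.symm
  · refine ⟨(B 0 : V), (B 1 : V), fun w hw =>
      ⟨B.repr ⟨w, hw⟩ 0, B.repr ⟨w, hw⟩ 1, ?_⟩⟩
    have h0 := B.sum_repr ⟨w, hw⟩
    rw [Fin.sum_univ_two] at h0
    have := congrArg (Subtype.val) h0
    simpa using this.symm

/-- For every `m ≥ 3` there exist `u₁, u₂, u₃ ∈ F_{2^m}²` such that for all
`x₁, …, x₅ ∈ F_{2^m}`, at least one of `u₁, u₂, u₃` is not in the `F_2`-span of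
`{(x_j, x_j³) : 1 ≤ j ≤ 5}`. Equivalently, `ρ₃(BCH(2,m)) ≥ 6`. -/
theorem rho_three_BCH_two_ge_six (m : ℕ) (hm : 3 ≤ m) :
    ∃ u₁ u₂ u₃ : GaloisField 2 m × GaloisField 2 m,
      ∀ x₁ x₂ x₃ x₄ x₅ : GaloisField 2 m,
        u₁ ∉ Submodule.span (ZMod 2)
            ((fun x : GaloisField 2 m => (x, x ^ 3)) '' {x₁, x₂, x₃, x₄, x₅}) ∨
        u₂ ∉ Submodule.span (ZMod 2)
            ((fun x : GaloisField 2 m => (x, x ^ 3)) '' {x₁, x₂, x₃, x₄, x₅}) ∨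
        u₃ ∉ Submodule.span (ZMod 2)
            ((fun x : GaloisField 2 m => (x, x ^ 3)) '' {x₁, x₂, x₃, x₄, x₅}) := by
  set K := GaloisField 2 m with hK
  have hm0 : m ≠ 0 := by omega
  have hfr : finrank (ZMod 2) K = m := GaloisField.finrank 2 hm0
  let B : Basis (Fin (finrank (ZMod 2) K)) (ZMod 2) K := finBasis (ZMod 2) K
  let e : Fin 3 → Fin (finrank (ZMod 2) K) := fun i => ⟨(i : ℕ), by omega⟩
  have he : Function.Injective e := by
    intro i j hij
    have h' : ((e i : Fin (finrank (ZMod 2) K)) : ℕ) = ((e j : Fin (finrank (ZMod 2) K)) : ℕ) :=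
      congrArg Fin.val hij
    simp only [e] at h'
    exact Fin.ext h'
  let w : Fin 3 → K := fun i => B (e i)
  have hw : LinearIndependent (ZMod 2) w := B.linearIndependent.comp e he
  refine ⟨(0, w 0), (0, w 1), (0, w 2), ?_⟩
  intro x₁ x₂ x₃ x₄ x₅
  by_contra hcon
  push_neg at hcon
  obtain ⟨h1, h2, h3⟩ := hcon
  set v : Fin 5 → K := ![x₁, x₂, x₃, x₄, x₅] with hv
  have hrange : ({x₁, x₂, x₃, x₄, x₅} : Set K) = Set.range v := by
    ext z
    constructor
    · intro hz
      simp only [Set.mem_insert_iff, Set.mem_singleton_iff] at hz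
      rcases hz with rfl | rfl | rfl | rfl | rfl
      exacts [⟨0, rfl⟩, ⟨1, rfl⟩, ⟨2, rfl⟩, ⟨3, rfl⟩, ⟨4, rfl⟩]
    · rintro ⟨j, rfl⟩
      fin_cases j <;> simp [hv]
  have hset : ((fun x : K => (x, x ^ 3)) '' {x₁, x₂, x₃, x₄, x₅})
      = Set.range (fun j => (v j, v j ^ 3)) := by
    rw [hrange, ← Set.range_comp]
    rfl
  rw [hset] at h1 h2 h3
  have hmem : ∀ i : Fin 3, ∃ c : Fin 5 → ZMod 2,
      (∑ j, c j • v j = 0) ∧ (∑ j, c j • (v j) ^ 3 = w i) := by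
    intro i
    have hi : ((0 : K), w i) ∈ Submodule.span (ZMod 2)
        (Set.range (fun j => (v j, v j ^ 3))) := by
      fin_cases i <;> assumption
    obtain ⟨c, hc⟩ := (mem_span_range_iff_exists_fun (ZMod 2)).mp hi
    refine ⟨c, ?_, ?_⟩
    · have := congrArg Prod.fst hc
      simpa [Prod.fst_sum] using this
    · have := congrArg Prod.snd hc
      simpa [Prod.snd_sum] using this
  choose c hc1 hc2 using hmem
  let L : (Fin 5 → ZMod 2) →ₗ[ZMod 2] K :=
    Fintype.linearCombination (ZMod 2) v
  let M3 : (Fin 5 → ZMod 2) →ₗ[ZMod 2] K :=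
    Fintype.linearCombination (ZMod 2) (fun j => (v j) ^ 3)
  have hLc : ∀ i, L (c i) = 0 := fun i => by
    simpa [L, Fintype.linearCombination_apply] using hc1 i
  have hMc : ∀ i, M3 (c i) = w i := fun i => by
    simpa [M3, Fintype.linearCombination_apply] using hc2 i
  have hwu : ∀ i, w i ∈ Submodule.map M3 (LinearMap.ker L) := fun i =>
    ⟨c i, hLc i, hMc i⟩
  rcases le_or_gt (finrank (ZMod 2) (LinearMap.range L)) 2 with hle | hlt
  · -- low-rank case: all the xⱼ lie in a 2-dimensional space
    obtain ⟨a, b, hab⟩ := bch_exists_pair (LinearMap.range L) hle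
    have hvW : ∀ j, ∃ cc dd : ZMod 2, v j = cc • a + dd • b := by
      intro j
      refine hab (v j) ⟨Pi.single j 1, ?_⟩
      simp [L]
    have hkey : ∀ i : Fin 3, w i = 0 ∨ w i = a * b * (a + b) := by
      intro i
      have hyW : ∀ j, ∃ cc dd : ZMod 2, (c i j • v j) = cc • a + dd • b := by
        intro j
        obtain ⟨cc, dd, hcd⟩ := hvW j
        refine ⟨c i j * cc, c i j * dd, ?_⟩
        rw [hcd, smul_add, smul_smul, smul_smul]
      have hsum := bch_sum_cube a b (fun j => c i j • v j) hyW Finset.univ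
      have hs0 : (∑ j, c i j • v j) = 0 := hc1 i
      have hs3 : (∑ j, (c i j • v j) ^ 3) = w i := by
        rw [← hc2 i]
        refine Finset.sum_congr rfl fun j _ => ?_
        rcases bch_zmod2_cases (c i j) with h | h <;> simp [h]
      rcases hsum.2 with h | h <;> rw [hs0, hs3] at h <;>
        simp only [ne_eq, OfNat.ofNat_ne_zero, not_false_eq_true, zero_pow, zero_add] at h
      · exact Or.inl h
      · exact Or.inr h
    have hne : ∀ i, w i ≠ 0 := fun i => hw.ne_zero i
    have hinj : Function.Injective w := fun i j hij => he (B.injective hij)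
    rcases hkey 0 with h0 | h0
    · exact hne 0 h0
    · rcases hkey 1 with h1' | h1'
      · exact hne 1 h1'
      · have : w 0 = w 1 := by rw [h0, h1']
        exact absurd (hinj this) (by decide)
  · -- high-rank case: the kernel is too small
    have hrn := LinearMap.finrank_range_add_finrank_ker L
    have hdom : finrank (ZMod 2) (Fin 5 → ZMod 2) = 5 := by
      simp [Module.finrank_pi]
    rw [hdom] at hrn
    have hker : finrank (ZMod 2) (LinearMap.ker L) ≤ 2 := by omega
    have hPle : finrank (ZMod 2) (Submodule.map M3 (LinearMap.ker L)) ≤ 2 :=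
      le_trans (Submodule.finrank_map_le _ _) hker
    have hspan : Submodule.span (ZMod 2) (Set.range w) ≤
        Submodule.map M3 (LinearMap.ker L) := by
      rw [Submodule.span_le]
      rintro _ ⟨i, rfl⟩
      exact hwu i
    have h3le : 3 ≤ finrank (ZMod 2) (Submodule.map M3 (LinearMap.ker L)) := by
      have hcard := finrank_span_eq_card hw
      rw [Fintype.card_fin] at hcard
      calc 3 = finrank (ZMod 2) (Submodule.span (ZMod 2) (Set.range w)) := hcard.symm
        _ ≤ _ := Submodule.finrank_mono hspan
    omega
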